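/- Let Ψ = Ψ_v be the square root embedding of a positively edge-weighted tree T. For nodes v_1, v_2, v_3, v_4 of T, if the oriented paths P_{v_1,v_2} (from v_1 to v_2) and P_{v_3,v_4} (from v_3 to v_4) share no edges, then (Ψ(v_2) - Ψ(v_1)) · (Ψ(v_4) - Ψ(v_3)) = 0. -/

import Mathlib

open SimpleGraph

/-- The unique path between two vertices of a tree, as a walk. -/
noncomputable def treePath {V : Type*} (G : SimpleGraph V) (hG : G.IsTree) (a b : V) :
    G.Walk a b :=
  (hG.existsUnique_path a b).choose

lemma treePath_isPath {V : Type*} (G : SimpleGraph V) (hG : G.IsTree) (a b : V) :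
    (treePath G hG a b).IsPath := (hG.existsUnique_path a b).choose_spec.1

lemma treePath_edges_subset {V : Type*} [DecidableEq V] (G : SimpleGraph V) (hG : G.IsTree) {a b : V}
    (p : G.Walk a b) : ∀ e ∈ (treePath G hG a b).edges, e ∈ p.edges := by
  have h : p.bypass = treePath G hG a b :=
    (hG.existsUnique_path a b).choose_spec.2 p.bypass p.bypass_isPath
  intro e he
  rw [← h] at he
  exact p.edges_bypass_subset he

lemma mem_treePath_iff {V : Type*} [DecidableEq V] (G : SimpleGraph V) (hG : G.IsTree) {a b v : V}
    {e : Sym2 V} (he : e ∉ (treePath G hG a b).edges) :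
    e ∈ (treePath G hG v a).edges ↔ e ∈ (treePath G hG v b).edges := by
  constructor
  · intro h
    have := treePath_edges_subset G hG
      ((treePath G hG v b).append (treePath G hG a b).reverse) e h
    rw [SimpleGraph.Walk.edges_append, List.mem_append] at this
    rcases this with h' | h'
    · exact h'
    · rw [SimpleGraph.Walk.edges_reverse, List.mem_reverse] at h'; exact absurd h' he
  · intro h
    have := treePath_edges_subset G hG
      ((treePath G hG v a).append (treePath G hG a b)) e h
    rw [SimpleGraph.Walk.edges_append, List.mem_append] at this
    rcases this with h' | h'
    · exact h'
    · exact absurd h' he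

/-- The square root embedding with base node `v`: the coordinate of `Ψ_v u` at edge `e`
is `√(w e)` if `e` lies on the path from `v` to `u`, and `0` otherwise. -/
noncomputable def sqrtEmbed {V : Type*} [DecidableEq V] (G : SimpleGraph V) (hG : G.IsTree)
    [Fintype G.edgeSet] (w : Sym2 V → ℝ) (v u : V) : EuclideanSpace ℝ G.edgeSet :=
  WithLp.toLp 2 (fun e => if (e : Sym2 V) ∈ (treePath G hG v u).edges then Real.sqrt (w e) else 0)

/-- The tree metric: sum of the weights of the edges on the unique path. -/
noncomputable def treeDist {V : Type*} (G : SimpleGraph V) (hG : G.IsTree)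
    (w : Sym2 V → ℝ) (a b : V) : ℝ :=
  ((treePath G hG a b).edges.map w).sum

open RealInnerProductSpace in
/-- if the paths `P_{v₁,v₂}` and `P_{v₃,v₄}` share no edges, then
`(Ψ v₂ - Ψ v₁) ⬝ (Ψ v₄ - Ψ v₃) = 0`. -/
theorem sqrtEmbed_inner_disjoint {V : Type*} [DecidableEq V] (G : SimpleGraph V)
    (hG : G.IsTree) [Fintype G.edgeSet] (w : Sym2 V → ℝ) (hw : ∀ e ∈ G.edgeSet, 0 < w e)
    (v v₁ v₂ v₃ v₄ : V)
    (hdisj : ∀ e : Sym2 V, e ∈ (treePath G hG v₁ v₂).edges →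
      e ∉ (treePath G hG v₃ v₄).edges) :
    ⟪sqrtEmbed G hG w v v₂ - sqrtEmbed G hG w v v₁,
      sqrtEmbed G hG w v v₄ - sqrtEmbed G hG w v v₃⟫ = 0 := by
  rw [PiLp.inner_apply]
  apply Finset.sum_eq_zero
  intro e _
  simp only [PiLp.sub_apply, sqrtEmbed, PiLp.toLp_apply, RCLike.inner_apply, starRingEnd_apply, star_trivial]
  by_cases h12 : (e : Sym2 V) ∈ (treePath G hG v₁ v₂).edges
  · have h34 := hdisj e h12
    simp only [mem_treePath_iff G hG h34, sub_self, zero_mul]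
  · simp only [mem_treePath_iff G hG h12, sub_self, mul_zero]
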